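/- Suppose the Paving Conjecture holds. Then for every ε > 0 and every bounded operator T on ℓ₂(I) with ‖T e_i‖ = 1 for all i ∈ I, there is a partition {A_j}_{j=1}^r of I (with r depending only on ε and ‖T‖) such that for all j and all square-summable scalars {a_i}_{i∈A_j}: (1-ε) Σ_{i∈A_j} |a_i|² ≤ ‖Σ_{i∈A_j} a_i T e_i‖² ≤ (1+ε) Σ_{i∈A_j} |a_i|². -/

import Mathlib

/- The Paving Conjecture implies that the columns of any norm-one-columns bounded
operator on `ℓ₂(I)` can be partitioned into finitely many `ε`-Riesz basic sequences,
the number of pieces depending only on `ε` and `‖T‖`. -/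

noncomputable section

open scoped ENNReal

/-- Truncation of an `ℓ²` sequence to a set of coordinates. -/
def truncSeq {I : Type*} (A : Set I) (f : lp (fun _ : I => ℂ) 2) : lp (fun _ : I => ℂ) 2 :=
  ⟨A.indicator f, by
    apply memℓp_gen
    refine Summable.of_nonneg_of_le (fun i => by positivity) (fun i => ?_)
      ((lp.memℓp f).summable (by norm_num))
    exact Real.rpow_le_rpow (norm_nonneg _) (norm_indicator_le_norm_self _ _) (by norm_num)⟩

/-- The diagonal projection `Q_A` on `ℓ₂(I)`. -/
def Qop {I : Type*} (A : Set I) : lp (fun _ : I => ℂ) 2 →L[ℂ] lp (fun _ : I => ℂ) 2 :=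
  LinearMap.mkContinuous
    { toFun := truncSeq A
      map_add' := fun f g => lp.ext (funext fun i => by
        by_cases h : i ∈ A <;>
          simp [truncSeq, h, lp.coeFn_add, Set.indicator_of_mem, Set.indicator_of_notMem,
            Set.indicator] <;>
          show _ = A.indicator (⇑f) i + A.indicator (⇑g) i <;> simp [Set.indicator, h])
      map_smul' := fun c f => lp.ext (funext fun i => by
        by_cases h : i ∈ A <;>
          simp [truncSeq, h, lp.coeFn_smul, Set.indicator_of_mem, Set.indicator_of_notMem]) }
    1 (fun f => by
      rw [one_mul]
      refine lp.norm_le_of_tsum_le (p := 2) (by norm_num) (norm_nonneg f) ?_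
      have h1 : ‖f‖ ^ (2 : ℝ≥0∞).toReal = ∑' i, ‖f i‖ ^ (2 : ℝ≥0∞).toReal :=
        lp.norm_rpow_eq_tsum (by norm_num) f
      rw [h1]
      refine Summable.tsum_le_tsum (fun i => ?_) ?_ ((lp.memℓp f).summable (by norm_num))
      · exact Real.rpow_le_rpow (norm_nonneg _) (norm_indicator_le_norm_self _ _) (by norm_num)
      · refine Summable.of_nonneg_of_le (fun i => by positivity) (fun i => ?_)
          ((lp.memℓp f).summable (by norm_num))
        exact Real.rpow_le_rpow (norm_nonneg _) (norm_indicator_le_norm_self _ _) (by norm_num))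


section PavingAux

variable {I : Type*}

private lemma qop_coe (A : Set I) (f : lp (fun _ : I => ℂ) 2) (i : I) :
    (Qop A f) i = A.indicator f i := rfl

private lemma qop_fix (A : Set I) (a : lp (fun _ : I => ℂ) 2) (ha : ∀ i ∉ A, a i = 0) :
    Qop A a = a := by
  apply lp.ext
  funext i
  by_cases h : i ∈ A
  · rw [qop_coe, Set.indicator_of_mem h]
  · rw [qop_coe, Set.indicator_of_notMem h, ha i h]

private lemma norm_sq_eq_tsum (a : lp (fun _ : I => ℂ) 2) :
    ‖a‖ ^ 2 = ∑' i, ‖a i‖ ^ 2 := by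
  have h := lp.norm_rpow_eq_tsum (p := 2) (by norm_num) a
  have h2 : (2 : ℝ≥0∞).toReal = (2 : ℝ) := by norm_num
  rw [h2] at h
  calc ‖a‖ ^ 2 = ‖a‖ ^ (2 : ℝ) := by rw [Real.rpow_two]
    _ = ∑' i, ‖a i‖ ^ (2 : ℝ) := h
    _ = ∑' i, ‖a i‖ ^ 2 := by
        congr 1; funext i; rw [Real.rpow_two]

private lemma inner_qsq (A : Set I) (S : lp (fun _ : I => ℂ) 2 →L[ℂ] lp (fun _ : I => ℂ) 2)
    (a : lp (fun _ : I => ℂ) 2) (ha : ∀ i ∉ A, a i = 0) :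
    (inner ℂ (S a) a : ℂ) = inner ℂ (((Qop A).comp (S.comp (Qop A))) a) a := by
  rw [ContinuousLinearMap.comp_apply, ContinuousLinearMap.comp_apply, qop_fix A a ha,
    lp.inner_eq_tsum, lp.inner_eq_tsum]
  congr 1
  funext i
  by_cases h : i ∈ A
  · rw [qop_coe, Set.indicator_of_mem h]
  · rw [ha i h, inner_zero_right, inner_zero_right]

private lemma inner_bound (A : Set I) (S : lp (fun _ : I => ℂ) 2 →L[ℂ] lp (fun _ : I => ℂ) 2)
    (a : lp (fun _ : I => ℂ) 2) (ha : ∀ i ∉ A, a i = 0) (ε : ℝ)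
    (hA : ‖(Qop A).comp (S.comp (Qop A))‖ ≤ ε) :
    ‖(inner ℂ (S a) a : ℂ)‖ ≤ ε * ‖a‖ ^ 2 := by
  calc ‖(inner ℂ (S a) a : ℂ)‖ = ‖(inner ℂ (((Qop A).comp (S.comp (Qop A))) a) a : ℂ)‖ := by
        rw [inner_qsq A S a ha]
    _ ≤ ‖((Qop A).comp (S.comp (Qop A))) a‖ * ‖a‖ := norm_inner_le_norm _ _
    _ ≤ (‖(Qop A).comp (S.comp (Qop A))‖ * ‖a‖) * ‖a‖ :=
        mul_le_mul_of_nonneg_right (ContinuousLinearMap.le_opNorm _ _) (norm_nonneg a)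
    _ ≤ (ε * ‖a‖) * ‖a‖ :=
        mul_le_mul_of_nonneg_right (mul_le_mul_of_nonneg_right hA (norm_nonneg a))
          (norm_nonneg a)
    _ = ε * ‖a‖ ^ 2 := by ring

private lemma inner_S_eq (T : lp (fun _ : I => ℂ) 2 →L[ℂ] lp (fun _ : I => ℂ) 2)
    (a : lp (fun _ : I => ℂ) 2) :
    (inner ℂ (((ContinuousLinearMap.adjoint T).comp T - 1) a) a : ℂ)
      = (RCLike.ofReal (‖T a‖ ^ 2 - ‖a‖ ^ 2) : ℂ) := by
  rw [ContinuousLinearMap.sub_apply, inner_sub_left, ContinuousLinearMap.comp_apply,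
    ContinuousLinearMap.adjoint_inner_left, ContinuousLinearMap.one_apply,
    inner_self_eq_norm_sq_to_K, inner_self_eq_norm_sq_to_K,
    RCLike.ofReal_sub, RCLike.ofReal_pow, RCLike.ofReal_pow]

private lemma estimate (T : lp (fun _ : I => ℂ) 2 →L[ℂ] lp (fun _ : I => ℂ) 2)
    (A : Set I) (a : lp (fun _ : I => ℂ) 2) (ha : ∀ i ∉ A, a i = 0) (ε : ℝ)
    (hA : ‖(Qop A).comp ((((ContinuousLinearMap.adjoint T).comp T - 1)).comp (Qop A))‖ ≤ ε) :
    |‖T a‖ ^ 2 - ‖a‖ ^ 2| ≤ ε * ‖a‖ ^ 2 := by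
  have h := inner_bound A ((ContinuousLinearMap.adjoint T).comp T - 1) a ha ε hA
  rw [inner_S_eq T a, RCLike.norm_ofReal] at h
  exact h

private lemma diag_zero [DecidableEq I]
    (T : lp (fun _ : I => ℂ) 2 →L[ℂ] lp (fun _ : I => ℂ) 2)
    (hTcol : ∀ i, ‖T (lp.single 2 i 1)‖ = 1) (i : I) :
    (inner ℂ (((ContinuousLinearMap.adjoint T).comp T - 1) (lp.single 2 i 1))
      (lp.single 2 i 1) : ℂ) = 0 := by
  have hesingle : ‖(lp.single 2 i (1 : ℂ) : lp (fun _ : I => ℂ) 2)‖ = 1 := by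
    simpa using lp.norm_single (p := 2) (by norm_num) (fun _ : I => (1 : ℂ)) i
  rw [ContinuousLinearMap.sub_apply, inner_sub_left, ContinuousLinearMap.comp_apply,
    ContinuousLinearMap.adjoint_inner_left, ContinuousLinearMap.one_apply,
    inner_self_eq_norm_sq_to_K, inner_self_eq_norm_sq_to_K, hTcol i, hesingle]
  norm_num

private lemma S_norm_le (T : lp (fun _ : I => ℂ) 2 →L[ℂ] lp (fun _ : I => ℂ) 2) :
    ‖(ContinuousLinearMap.adjoint T).comp T - 1‖ ≤ ‖T‖ ^ 2 + 1 := by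
  have h1 : ‖((ContinuousLinearMap.adjoint T).comp T)‖ ≤ ‖T‖ ^ 2 := by
    calc ‖((ContinuousLinearMap.adjoint T).comp T)‖
        ≤ ‖ContinuousLinearMap.adjoint T‖ * ‖T‖ := ContinuousLinearMap.opNorm_comp_le _ _
      _ = ‖T‖ * ‖T‖ := by rw [ContinuousLinearMap.adjoint.norm_map T]
      _ = ‖T‖ ^ 2 := by ring
  have h2 : ‖(1 : lp (fun _ : I => ℂ) 2 →L[ℂ] lp (fun _ : I => ℂ) 2)‖ ≤ 1 :=
    ContinuousLinearMap.norm_id_le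
  calc ‖(ContinuousLinearMap.adjoint T).comp T - 1‖
      ≤ ‖((ContinuousLinearMap.adjoint T).comp T)‖
        + ‖(1 : lp (fun _ : I => ℂ) 2 →L[ℂ] lp (fun _ : I => ℂ) 2)‖ := norm_sub_le _ _
    _ ≤ ‖T‖ ^ 2 + 1 := add_le_add h1 h2

end PavingAux

theorem paving_implies_eps_riesz_decomposition {I : Type*} [DecidableEq I]
    -- the Paving Conjecture for operators on `ℓ₂(I)`
    (pc : ∀ ε : ℝ, 0 < ε → ∃ r : ℕ,
      ∀ S : lp (fun _ : I => ℂ) 2 →L[ℂ] lp (fun _ : I => ℂ) 2,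
        (∀ i, (inner ℂ (S (lp.single 2 i 1)) (lp.single 2 i 1) : ℂ) = 0) →
        ∃ A : Fin r → Set I,
          (∀ j k, j ≠ k → Disjoint (A j) (A k)) ∧ (⋃ j, A j) = Set.univ ∧
          ∀ j, ‖(Qop (A j)).comp (S.comp (Qop (A j)))‖ ≤ ε * ‖S‖) :
    -- conclusion: `ε`-Riesz decomposition, with `r` depending only on `ε` and `‖T‖`
    ∀ ε : ℝ, 0 < ε → ∀ C : ℝ, ∃ r : ℕ,
      ∀ T : lp (fun _ : I => ℂ) 2 →L[ℂ] lp (fun _ : I => ℂ) 2, ‖T‖ = C →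
        (∀ i, ‖T (lp.single 2 i 1)‖ = 1) →
        ∃ A : Fin r → Set I,
          (∀ j k, j ≠ k → Disjoint (A j) (A k)) ∧ (⋃ j, A j) = Set.univ ∧
          ∀ j, ∀ a : lp (fun _ : I => ℂ) 2, (∀ i, i ∉ A j → a i = 0) →
            (1 - ε) * ∑' i, ‖a i‖ ^ 2 ≤ ‖T a‖ ^ 2 ∧
            ‖T a‖ ^ 2 ≤ (1 + ε) * ∑' i, ‖a i‖ ^ 2 := by
  intro ε hε C
  obtain ⟨r, hr⟩ := pc (ε / (C ^ 2 + 1)) (by positivity)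
  refine ⟨r, fun T hTC hTcol => ?_⟩
  obtain ⟨A, hdisj, hcover, hpav⟩ :=
    hr ((ContinuousLinearMap.adjoint T).comp T - 1) (diag_zero T hTcol)
  refine ⟨A, hdisj, hcover, fun j a ha => ?_⟩
  have hC1 : (0:ℝ) < C ^ 2 + 1 := by positivity
  have hSnorm : ‖(ContinuousLinearMap.adjoint T).comp T - 1‖ ≤ C ^ 2 + 1 := by
    have := S_norm_le T
    rwa [hTC] at this
  have h4 : ε / (C ^ 2 + 1) * ‖(ContinuousLinearMap.adjoint T).comp T - 1‖ ≤ ε := by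
    rw [div_mul_eq_mul_div, div_le_iff₀ hC1]
    exact mul_le_mul_of_nonneg_left hSnorm (le_of_lt hε)
  have hest := estimate T (A j) a ha ε ((hpav j).trans h4)
  rw [abs_le] at hest
  rw [← norm_sq_eq_tsum a]
  constructor <;> nlinarith [hest.1, hest.2]
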